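/- arXiv:1911.03434 — 4 statements merged into one kernel-verified Lean document; each statement's English description precedes it below -/
import Mathlib

section
/- (Theorem 2.1, (1) ⇔ (2)) Let G be a second countable LCA group, Λ a closed subgroup of Ĝ, and W ⊆ L²(G) a closed subspace. Then W is Λ-modulation invariant if and only if Z̃(W) is a multiplicatively invariant subspace of L²(Π, L²(D)) with respect to the determining set 𝒟 = {X_λ|_Π : λ ∈ Λ}. -/
open MeasureTheory
open scoped ENNReal

/-- Theorem 2.1, (1) ⇔ (2). A closed subspace W ⊆ L²(G) is
Λ-modulation invariant iff Z̃(W) is multiplicatively invariant in L²(Π, L²(D))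
with respect to the determining set 𝒟 = {X_λ|_Π : λ ∈ Λ}. -/
theorem stmt2
    (G : Type) [CommGroup G] [TopologicalSpace G] [IsTopologicalGroup G]
    [LocallyCompactSpace G] [SecondCountableTopology G]
    [MeasurableSpace G] [BorelSpace G]
    (μ : MeasureTheory.Measure G) [μ.IsHaarMeasure]
    [MeasurableSpace (PontryaginDual G)] [BorelSpace (PontryaginDual G)]
    [LocallyCompactSpace (PontryaginDual G)] [SecondCountableTopology (PontryaginDual G)]
    (ν : MeasureTheory.Measure (PontryaginDual G)) [ν.IsHaarMeasure]
    -- Λ a closed subgroup of the dual group Ĝ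
    (Λ : Subgroup (PontryaginDual G)) (hΛ : IsClosed (Λ : Set (PontryaginDual G)))
    -- Π, a measurable section for G / Λ* (Λ* = the annihilator of Λ in G)
    (PiS : Set G) (hPiSmeas : MeasurableSet PiS)
    (hPiSsec : ∀ x : G, ∃! p, p ∈ PiS ∧ ∀ l ∈ Λ, l (x / p) = 1)
    -- D, a measurable section for Ĝ / Λ
    (DS : Set (PontryaginDual G)) (hDSmeas : MeasurableSet DS)
    (hDSsec : ∀ χ : PontryaginDual G, ∃! d, d ∈ DS ∧ χ / d ∈ Λ)
    -- the modulation operators M_χ on L²(G) : (M_χ f)(x) = χ(x) f(x)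
    (Mod : PontryaginDual G → (MeasureTheory.Lp ℂ 2 μ →L[ℂ] MeasureTheory.Lp ℂ 2 μ))
    (hMod : ∀ χ f, Mod χ f =ᵐ[μ] fun x => (χ x : ℂ) * f x)
    -- the translation operators T_λ on L²(Ĝ) : (T_λ g)(χ) = g(χ - λ)
    (Trans : PontryaginDual G → (MeasureTheory.Lp ℂ 2 ν →L[ℂ] MeasureTheory.Lp ℂ 2 ν))
    (hTrans : ∀ l g, Trans l g =ᵐ[ν] fun χ => g (χ / l))
    -- the Fourier (Plancherel) transform F : L²(G) → L²(Ĝ), intertwining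
    -- modulations with translations
    (F : MeasureTheory.Lp ℂ 2 μ ≃ₗᵢ[ℂ] MeasureTheory.Lp ℂ 2 ν)
    (hF : ∀ χ f, F (Mod χ f) = Trans χ (F f))
    -- the Zak-type isometric isomorphism Z : L²(Ĝ) → L²(Π, L²(D)) of
    -- Bownik–Helson–Petersen, satisfying Z(T_λ φ) = X_λ|_Π · Z(φ) for λ ∈ Λ
    (Z : MeasureTheory.Lp ℂ 2 ν ≃ₗᵢ[ℂ]
      MeasureTheory.Lp (MeasureTheory.Lp ℂ 2 (ν.restrict DS)) 2 (μ.restrict PiS))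
    (hZ : ∀ l ∈ Λ, ∀ g, Z (Trans l g) =ᵐ[μ.restrict PiS]
      fun x => ((l x : ℂ)) • (Z g) x)
    (W : Submodule ℂ (Lp ℂ 2 μ)) (hW : IsClosed (W : Set (Lp ℂ 2 μ))) :
    (∀ l ∈ Λ, ∀ f ∈ W, Mod l f ∈ W) ↔
      (∀ φ ∈ (fun f : Lp ℂ 2 μ => Z (F f)) '' (W : Set (Lp ℂ 2 μ)), ∀ l ∈ Λ,
        ∀ ψ : Lp (Lp ℂ 2 (ν.restrict DS)) 2 (μ.restrict PiS),
          (ψ =ᵐ[μ.restrict PiS] fun x => ((l x : ℂ)) • φ x) →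
            ψ ∈ (fun f : Lp ℂ 2 μ => Z (F f)) '' (W : Set (Lp ℂ 2 μ))) := by
  constructor
  · rintro h φ ⟨f, hf, rfl⟩ l hl ψ hψ
    refine ⟨Mod l f, h l hl f hf, ?_⟩
    refine (MeasureTheory.Lp.ext ?_).symm
    calc ψ =ᵐ[μ.restrict PiS] (fun x => ((l x : ℂ)) • (Z (F f)) x) := hψ
      _ =ᵐ[μ.restrict PiS] Z (Trans l (F f)) := (hZ l hl (F f)).symm
    simp only [hF]
    exact Filter.EventuallyEq.rfl
  · intro h l hl f hf
    obtain ⟨g, hg, hgeq⟩ := h (Z (F f)) ⟨f, hf, rfl⟩ l hl (Z (F (Mod l f)))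
      (by rw [hF]; exact hZ l hl (F f))
    have : g = Mod l f := F.injective (Z.injective hgeq)
    exact this ▸ hg
end

section
/- (Theorem 2.1, generator formula) Let G be a second countable LCA group, Λ a closed subgroup of Ĝ, and 𝒜 a countable subset of L²(G). If W = M^Λ(𝒜) is the Λ-modulation invariant space generated by 𝒜, then the measurable range function J associated with W satisfies J(x) = closure of span{Z̃(φ)(x) : φ ∈ 𝒜} for almost every x ∈ Π. -/
open MeasureTheory
open scoped ENNReal

private lemma measurable_of_measurable_dist' {α H : Type*} [MeasurableSpace α]
    [MetricSpace H] [SecondCountableTopology H] [MeasurableSpace H] [BorelSpace H]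
    {f : α → H} (h : ∀ y : H, Measurable fun x => dist (f x) y) : Measurable f := by
  apply measurable_of_isOpen
  intro U hU
  obtain ⟨D, Dcount, Ddense⟩ := TopologicalSpace.exists_countable_dense H
  have key : f ⁻¹' U = ⋃ y ∈ D, ⋃ q : ℚ,
      {x | dist (f x) y < (q : ℝ) ∧ Metric.ball y (q : ℝ) ⊆ U} := by
    ext x
    simp only [Set.mem_preimage, Set.mem_iUnion]
    constructor
    · intro hx
      obtain ⟨ε, hε, hball⟩ := Metric.isOpen_iff.1 hU _ hx
      obtain ⟨y, hyD, hy⟩ := Ddense.exists_dist_lt (f x) (show (0:ℝ) < ε/3 by linarith)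
      obtain ⟨q, hq1, hq2⟩ := exists_rat_btwn (show dist (f x) y < 2*ε/3 by linarith)
      refine ⟨y, hyD, q, hq1, ?_⟩
      · intro z hz
        apply hball
        rw [Metric.mem_ball] at hz ⊢
        calc dist z (f x) ≤ dist z y + dist y (f x) := dist_triangle _ _ _
          _ < (q : ℝ) + ε/3 := by rw [dist_comm y (f x)]; linarith
          _ ≤ ε := by linarith
    · rintro ⟨y, _, q, hx1, hx2⟩
      exact hx2 hx1
  rw [key]
  refine MeasurableSet.biUnion Dcount fun y _ => MeasurableSet.iUnion fun q => ?_
  have : {x | dist (f x) y < (q : ℝ) ∧ Metric.ball y (q : ℝ) ⊆ U}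
      = {x | dist (f x) y < (q : ℝ)} ∩ {x | Metric.ball y (q : ℝ) ⊆ U} := rfl
  rw [this]
  refine MeasurableSet.inter ((h y) measurableSet_Iio) ?_
  by_cases hb : Metric.ball y (q : ℝ) ⊆ U
  · simp [hb]
  · simp [hb]

private lemma isClosed_ae_mem {α : Type*} {m0 : MeasurableSpace α} {μ : Measure α}
    {H : Type*} [NormedAddCommGroup H] [NormedSpace ℂ H]
    (K : α → Submodule ℂ H) (hK : ∀ x, IsClosed (K x : Set H)) :
    IsClosed {g : Lp H 2 μ | ∀ᵐ x ∂μ, g x ∈ K x} := by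
  refine IsSeqClosed.isClosed ?_
  intro f g hf hg
  have h2 : Filter.Tendsto (fun n => eLpNorm (⇑(f n) - ⇑g) 2 μ) Filter.atTop (nhds 0) :=
    (Lp.tendsto_Lp_iff_tendsto_eLpNorm' f g).1 hg
  have hm : TendstoInMeasure μ (fun n => ⇑(f n)) Filter.atTop ⇑g :=
    tendstoInMeasure_of_tendsto_eLpNorm (by norm_num)
      (fun n => Lp.aestronglyMeasurable _) (Lp.aestronglyMeasurable _) h2
  obtain ⟨ns, _, hns⟩ := hm.exists_seq_tendsto_ae
  filter_upwards [hns, MeasureTheory.ae_all_iff.2 hf] with x hx hfx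
  exact (hK x).mem_of_tendsto hx (Filter.Eventually.of_forall fun n => hfx (ns n))

set_option maxHeartbeats 1000000 in
/-- Theorem 2.1, generator formula. If W = M^Λ(𝒜) is the
Λ-modulation invariant space generated by a countable set 𝒜 ⊆ L²(G), then the
measurable range function J associated with W satisfies
J(x) = closure span{Z̃(φ)(x) : φ ∈ 𝒜} for a.e. x ∈ Π. -/
theorem stmt4
    (G : Type) [CommGroup G] [TopologicalSpace G] [IsTopologicalGroup G]
    [LocallyCompactSpace G] [SecondCountableTopology G]
    [MeasurableSpace G] [BorelSpace G]
    (μ : MeasureTheory.Measure G) [μ.IsHaarMeasure]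
    [MeasurableSpace (PontryaginDual G)] [BorelSpace (PontryaginDual G)]
    [LocallyCompactSpace (PontryaginDual G)] [SecondCountableTopology (PontryaginDual G)]
    (ν : MeasureTheory.Measure (PontryaginDual G)) [ν.IsHaarMeasure]
    -- Λ a closed subgroup of the dual group Ĝ
    (Λ : Subgroup (PontryaginDual G)) (hΛ : IsClosed (Λ : Set (PontryaginDual G)))
    -- Π, a measurable section for G / Λ* (Λ* = the annihilator of Λ in G)
    (PiS : Set G) (hPiSmeas : MeasurableSet PiS)
    (hPiSsec : ∀ x : G, ∃! p, p ∈ PiS ∧ ∀ l ∈ Λ, l (x / p) = 1)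
    -- D, a measurable section for Ĝ / Λ
    (DS : Set (PontryaginDual G)) (hDSmeas : MeasurableSet DS)
    (hDSsec : ∀ χ : PontryaginDual G, ∃! d, d ∈ DS ∧ χ / d ∈ Λ)
    -- the modulation operators M_χ on L²(G) : (M_χ f)(x) = χ(x) f(x)
    (Mod : PontryaginDual G → (MeasureTheory.Lp ℂ 2 μ →L[ℂ] MeasureTheory.Lp ℂ 2 μ))
    (hMod : ∀ χ f, Mod χ f =ᵐ[μ] fun x => (χ x : ℂ) * f x)
    -- the translation operators T_λ on L²(Ĝ) : (T_λ g)(χ) = g(χ - λ)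
    (Trans : PontryaginDual G → (MeasureTheory.Lp ℂ 2 ν →L[ℂ] MeasureTheory.Lp ℂ 2 ν))
    (hTrans : ∀ l g, Trans l g =ᵐ[ν] fun χ => g (χ / l))
    -- the Fourier (Plancherel) transform F : L²(G) → L²(Ĝ), intertwining
    -- modulations with translations
    (F : MeasureTheory.Lp ℂ 2 μ ≃ₗᵢ[ℂ] MeasureTheory.Lp ℂ 2 ν)
    (hF : ∀ χ f, F (Mod χ f) = Trans χ (F f))
    -- the Zak-type isometric isomorphism Z : L²(Ĝ) → L²(Π, L²(D)) of
    -- Bownik–Helson–Petersen, satisfying Z(T_λ φ) = X_λ|_Π · Z(φ) for λ ∈ Λ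
    (Z : MeasureTheory.Lp ℂ 2 ν ≃ₗᵢ[ℂ]
      MeasureTheory.Lp (MeasureTheory.Lp ℂ 2 (ν.restrict DS)) 2 (μ.restrict PiS))
    (hZ : ∀ l ∈ Λ, ∀ g, Z (Trans l g) =ᵐ[μ.restrict PiS]
      fun x => ((l x : ℂ)) • (Z g) x)
    (A : Set (Lp ℂ 2 μ)) (hA : A.Countable)
    -- W = M^Λ(𝒜), the closed span of {M_λ f : f ∈ 𝒜, λ ∈ Λ}
    (W : Submodule ℂ (Lp ℂ 2 μ))
    (hWdef : W = (Submodule.span ℂ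
      {g : Lp ℂ 2 μ | ∃ f ∈ A, ∃ l ∈ Λ, g = Mod l f}).topologicalClosure)
    -- J is the measurable range function associated with W, with orthogonal
    -- projections P
    (J : G → Submodule ℂ (Lp ℂ 2 (ν.restrict DS)))
    (P : G → (Lp ℂ 2 (ν.restrict DS)) →L[ℂ] (Lp ℂ 2 (ν.restrict DS)))
    (hJclosed : ∀ x, IsClosed ((J x : Set (Lp ℂ 2 (ν.restrict DS)))))
    (hProj : ∀ x v, P x v ∈ J x ∧ ∀ w ∈ J x, (inner ℂ (v - P x v) w : ℂ) = 0)
    (hJmeas : ∀ a b : Lp ℂ 2 (ν.restrict DS), Measurable fun x => (inner ℂ (P x a) b : ℂ))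
    (hJW : ∀ f : Lp ℂ 2 μ, f ∈ W ↔ ∀ᵐ x ∂(μ.restrict PiS), (Z (F f)) x ∈ J x) :
    ∀ᵐ x ∂(μ.restrict PiS),
      J x = (Submodule.span ℂ
        ((fun f : Lp ℂ 2 μ => (Z (F f)) x) '' A)).topologicalClosure := by
  classical
  set K : G → Submodule ℂ (Lp ℂ 2 (ν.restrict DS)) := fun x =>
    (Submodule.span ℂ ((fun f : Lp ℂ 2 μ => (Z (F f)) x) '' A)).topologicalClosure with hKdef
  have hKclosed : ∀ x, IsClosed (K x : Set (Lp ℂ 2 (ν.restrict DS))) :=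
    fun x => Submodule.isClosed_topologicalClosure _
  -- every generator is in W
  have hAW : ∀ f ∈ A, f ∈ W := by
    intro f hf
    have hone : ∀ x : G, ((1 : PontryaginDual G) x : ℂ) = 1 := fun x => by
      rw [show (1 : PontryaginDual G) x = 1 from rfl]; simp
    have h1 : Mod 1 f = f := by
      apply Lp.ext
      filter_upwards [hMod 1 f] with x hx
      rw [hx, hone, one_mul]
    rw [hWdef]
    exact Submodule.le_topologicalClosure _
      (Submodule.subset_span ⟨f, hf, 1, one_mem Λ, h1.symm⟩)
  -- Step A : K x ≤ J x a.e.
  have stepA : ∀ᵐ x ∂(μ.restrict PiS), K x ≤ J x := by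
    have h1 : ∀ᵐ x ∂(μ.restrict PiS), ∀ f ∈ A, (Z (F f)) x ∈ J x :=
      (MeasureTheory.ae_ball_iff hA).2 fun f hf => (hJW f).1 (hAW f hf)
    filter_upwards [h1] with x hx
    refine Submodule.topologicalClosure_minimal _ ?_ (hJclosed x)
    rw [Submodule.span_le]
    rintro v ⟨f, hf, rfl⟩
    exact hx f hf
  -- the closed submodule V of f with Z(F f) x ∈ K x a.e.
  let V : Submodule ℂ (Lp ℂ 2 μ) :=
    { carrier := {f | ∀ᵐ x ∂(μ.restrict PiS), (Z (F f)) x ∈ K x}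
      add_mem' := by
        intro a b ha hb
        have h1 : Z (F (a + b)) = Z (F a) + Z (F b) := by simp
        show ∀ᵐ x ∂(μ.restrict PiS), (Z (F (a + b))) x ∈ K x
        rw [h1]
        filter_upwards [ha, hb, Lp.coeFn_add (Z (F a)) (Z (F b))] with x hxa hxb hxadd
        rw [hxadd]
        exact add_mem hxa hxb
      zero_mem' := by
        have h1 : Z (F (0 : Lp ℂ 2 μ)) = 0 := by simp
        show ∀ᵐ x ∂(μ.restrict PiS), (Z (F (0 : Lp ℂ 2 μ))) x ∈ K x
        rw [h1]
        filter_upwards [Lp.coeFn_zero (Lp ℂ 2 (ν.restrict DS)) 2 (μ.restrict PiS)] with x hx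
        rw [hx]; exact zero_mem _
      smul_mem' := by
        intro c a ha
        have h1 : Z (F (c • a)) = c • Z (F a) := by simp
        show ∀ᵐ x ∂(μ.restrict PiS), (Z (F (c • a))) x ∈ K x
        rw [h1]
        filter_upwards [ha, Lp.coeFn_smul c (Z (F a))] with x hxa hxs
        rw [hxs]
        exact Submodule.smul_mem _ _ hxa }
  have hVclosed : IsClosed (V : Set (Lp ℂ 2 μ)) := by
    have h1 : (V : Set (Lp ℂ 2 μ))
        = (fun f => Z (F f)) ⁻¹'
          {g : Lp (Lp ℂ 2 (ν.restrict DS)) 2 (μ.restrict PiS) |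
            ∀ᵐ x ∂(μ.restrict PiS), g x ∈ K x} := rfl
    rw [h1]
    exact (isClosed_ae_mem K hKclosed).preimage (Z.continuous.comp F.continuous)
  have hWV : W ≤ V := by
    rw [hWdef]
    refine Submodule.topologicalClosure_minimal _ ?_ hVclosed
    rw [Submodule.span_le]
    rintro g ⟨f, hf, l, hl, rfl⟩
    show ∀ᵐ x ∂(μ.restrict PiS), (Z (F (Mod l f))) x ∈ K x
    rw [hF]
    filter_upwards [hZ l hl (F f)] with x hx
    rw [hx]
    exact Submodule.smul_mem _ _
      (Submodule.le_topologicalClosure _ (Submodule.subset_span ⟨f, hf, rfl⟩))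
  -- projection facts
  have hPid : ∀ x (c : Lp ℂ 2 (ν.restrict DS)), (inner ℂ (P x c) (P x c) : ℂ) = inner ℂ c (P x c) := by
    intro x c
    have h0 := (hProj x c).2 (P x c) (hProj x c).1
    rw [inner_sub_left] at h0
    linear_combination -h0
  have hPnormsq : ∀ x (c : Lp ℂ 2 (ν.restrict DS)),
      ‖P x c‖ ^ 2 = (inner ℂ (P x c) c : ℂ).re := by
    intro x c
    have h1 : ‖P x c‖ ^ 2 = (inner ℂ (P x c) (P x c) : ℂ).re := by
      have h2 := norm_sq_eq_re_inner (𝕜 := ℂ) (P x c)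
      simpa using h2
    have h3 : (inner ℂ c (P x c) : ℂ) = starRingEnd ℂ (inner ℂ (P x c) c : ℂ) :=
      (inner_conj_symm _ _).symm
    rw [h1, hPid x c, h3, Complex.conj_re]
  have hPle : ∀ x (c : Lp ℂ 2 (ν.restrict DS)), ‖P x c‖ ≤ ‖c‖ := by
    intro x c
    have h1 := hPnormsq x c
    have h2 : (inner ℂ (P x c) c : ℂ).re ≤ ‖P x c‖ * ‖c‖ := by
      calc (inner ℂ (P x c) c : ℂ).re ≤ ‖(inner ℂ (P x c) c : ℂ)‖ := Complex.re_le_norm _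
        _ ≤ ‖P x c‖ * ‖c‖ := norm_inner_le_norm (𝕜 := ℂ) _ _
    nlinarith [norm_nonneg (P x c), norm_nonneg c]
  haveI : SigmaFinite ν := inferInstance
  haveI : SigmaFinite (ν.restrict DS) := inferInstance
  haveI : Fact ((2 : ℝ≥0∞) ≠ ∞) := ⟨ENNReal.ofNat_ne_top⟩
  haveI : SecondCountableTopology (Lp ℂ 2 (ν.restrict DS)) := inferInstance
  letI : MeasurableSpace (Lp ℂ 2 (ν.restrict DS)) := borel _
  haveI : BorelSpace (Lp ℂ 2 (ν.restrict DS)) := ⟨rfl⟩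
  have hPmeas : ∀ c : Lp ℂ 2 (ν.restrict DS), Measurable fun x => P x c := by
    intro c
    apply measurable_of_measurable_dist'
    intro y
    have h1 : (fun x => dist (P x c) y)
        = fun x => Real.sqrt
            ((inner ℂ (P x c) c : ℂ).re - 2 * (inner ℂ (P x c) y : ℂ).re + ‖y‖ ^ 2) := by
      funext x
      rw [dist_eq_norm, ← Real.sqrt_sq (norm_nonneg (P x c - y))]
      congr 1
      rw [norm_sub_sq (𝕜 := ℂ), hPnormsq x c]
      simp
    rw [h1]
    exact ((((Complex.measurable_re.comp (hJmeas c c)).sub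
      ((Complex.measurable_re.comp (hJmeas c y)).const_mul 2)).add measurable_const)).sqrt
  -- the truncated fields are in L²
  have hu_mem : ∀ (c : Lp ℂ 2 (ν.restrict DS)) (m : ℕ),
      MemLp ((spanningSets (μ.restrict PiS) m).indicator (fun x => P x c)) 2 (μ.restrict PiS) := by
    intro c m
    have hsm : StronglyMeasurable
        ((spanningSets (μ.restrict PiS) m).indicator fun x => P x c) :=
      ((hPmeas c).stronglyMeasurable).indicator (measurableSet_spanningSets _ m)
    refine ⟨hsm.aestronglyMeasurable, ?_⟩
    have hb : ∀ a, ‖(spanningSets (μ.restrict PiS) m).indicator (fun x => P x c) a‖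
        ≤ ‖(spanningSets (μ.restrict PiS) m).indicator (fun _ => (‖c‖ : ℝ)) a‖ := by
      intro a
      by_cases ha : a ∈ spanningSets (μ.restrict PiS) m
      · rw [Set.indicator_of_mem ha, Set.indicator_of_mem ha,
          Real.norm_of_nonneg (norm_nonneg c)]
        exact hPle a c
      · rw [Set.indicator_of_notMem ha, Set.indicator_of_notMem ha]
        simp
    refine lt_of_le_of_lt (eLpNorm_mono hb) ?_
    rw [eLpNorm_indicator_const (measurableSet_spanningSets _ m) two_ne_zero ENNReal.ofNat_ne_top]
    exact ENNReal.mul_lt_top ENNReal.coe_lt_top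
      (ENNReal.rpow_lt_top_of_nonneg (by norm_num) (measure_spanningSets_lt_top _ m).ne)
  -- the key step : P x c ∈ K x a.e. on each spanning set
  have hstep : ∀ (c : Lp ℂ 2 (ν.restrict DS)) (m : ℕ),
      ∀ᵐ x ∂(μ.restrict PiS), x ∈ spanningSets (μ.restrict PiS) m → P x c ∈ K x := by
    intro c m
    set u := (spanningSets (μ.restrict PiS) m).indicator (fun x => P x c) with hu
    set g := (hu_mem c m).toLp u with hg
    have hgu : ⇑g =ᵐ[μ.restrict PiS] u := MemLp.coeFn_toLp _
    have hZg : Z (F (F.symm (Z.symm g))) = g := by simp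
    have hfW : F.symm (Z.symm g) ∈ W := by
      apply (hJW _).2
      rw [hZg]
      filter_upwards [hgu] with x hx
      rw [hx, hu]
      by_cases hxs : x ∈ spanningSets (μ.restrict PiS) m
      · rw [Set.indicator_of_mem hxs]; exact (hProj x c).1
      · rw [Set.indicator_of_notMem hxs]; exact zero_mem _
    have hK' : ∀ᵐ x ∂(μ.restrict PiS), g x ∈ K x := by
      have h2 := hWV hfW
      have h3 : ∀ᵐ x ∂(μ.restrict PiS), (Z (F (F.symm (Z.symm g)))) x ∈ K x := h2
      rwa [hZg] at h3
    filter_upwards [hK', hgu] with x hx hxu hxs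
    rw [hxu, hu, Set.indicator_of_mem hxs] at hx
    exact hx
  -- a dense sequence in the fibre space
  haveI : Nonempty (Lp ℂ 2 (ν.restrict DS)) := ⟨0⟩
  set cs : ℕ → Lp ℂ 2 (ν.restrict DS) := TopologicalSpace.denseSeq _ with hcs
  have hcsdense : DenseRange cs := TopologicalSpace.denseRange_denseSeq _
  have hall : ∀ᵐ x ∂(μ.restrict PiS),
      ∀ n m : ℕ, x ∈ spanningSets (μ.restrict PiS) m → P x (cs n) ∈ K x :=
    MeasureTheory.ae_all_iff.2 fun n => MeasureTheory.ae_all_iff.2 fun m => hstep (cs n) m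
  filter_upwards [stepA, hall] with x hKJ hx
  refine le_antisymm ?_ hKJ
  intro v hv
  have hPv : P x v = v := by
    have h0 : v - P x v ∈ J x := Submodule.sub_mem _ hv (hProj x v).1
    have h1 := (hProj x v).2 _ h0
    have h2 : v - P x v = 0 := inner_self_eq_zero.1 h1
    exact (sub_eq_zero.1 h2).symm
  obtain ⟨m, hm⟩ : ∃ m, x ∈ spanningSets (μ.restrict PiS) m := by
    have h3 : x ∈ ⋃ i, spanningSets (μ.restrict PiS) i := by
      rw [iUnion_spanningSets]; exact Set.mem_univ x
    exact Set.mem_iUnion.1 h3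
  obtain ⟨φ, hφmem, hφtendsto⟩ := mem_closure_iff_seq_limit.1 (hcsdense v)
  have h1 : Filter.Tendsto (fun k => P x (φ k)) Filter.atTop (nhds v) := by
    have h2 := ((P x).continuous.tendsto v).comp hφtendsto
    rwa [hPv] at h2
  refine (hKclosed x).mem_of_tendsto h1 (Filter.Eventually.of_forall fun k => ?_)
  obtain ⟨n, hn⟩ := hφmem k
  rw [← hn]
  exact hx n m hm
end

section
/- (Proposition 3.1) Let G be a second countable LCA group and Λ a closed subgroup of Ĝ. The function θ(V, W) = inf{α > 0 : m({x ∈ Π : ∥P_{J_V}(x) − P_{J_W}(x)∥ > α}) = 0} is a metric on MI(G), the collection of all Λ-modulation invariant subspaces of L²(G) (with spaces identified when their range functions agree a.e.): θ is nonnegative, θ(V,W) = 0 iff V = W, θ is symmetric, and θ satisfies the triangle inequality. -/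
open MeasureTheory
open scoped ENNReal

/-- The modulation metric
θ(V, W) = inf{α > 0 : m({x ∈ Π : ‖P_{J_V}(x) − P_{J_W}(x)‖ > α}) = 0},
here expressed via an assignment P of (projection-valued) range functions. -/
noncomputable def modMetric {X H ι : Type*} [MeasurableSpace X]
    [NormedAddCommGroup H] [NormedSpace ℂ H]
    (m' : MeasureTheory.Measure X) (P : ι → X → H →L[ℂ] H) (V W : ι) : ℝ :=
  sInf {α : ℝ | 0 < α ∧ m' {x | α < ‖P V x - P W x‖} = 0}


private lemma proj_aux {E : Type*} [NormedAddCommGroup E] [InnerProductSpace ℂ E]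
    (T : E →L[ℂ] E) (J : Submodule ℂ E)
    (h : ∀ v, T v ∈ J ∧ ∀ w ∈ J, (inner ℂ (v - T v) w : ℂ) = 0) :
    ‖T‖ ≤ 1 ∧ ∀ v, v ∈ J ↔ T v = v := by
  have key : ∀ v, (inner ℂ (v - T v) (T v) : ℂ) = 0 := fun v => (h v).2 (T v) (h v).1
  constructor
  · refine T.opNorm_le_bound zero_le_one (fun v => ?_)
    rw [one_mul]
    have hp := norm_add_sq_eq_norm_sq_add_norm_sq_of_inner_eq_zero (𝕜 := ℂ)
      (v - T v) (T v) (key v)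
    have hvv : v - T v + T v = v := by abel
    rw [hvv] at hp
    nlinarith [norm_nonneg (v - T v), norm_nonneg (T v), norm_nonneg v]
  · intro v
    constructor
    · intro hv
      have hmem : v - T v ∈ J := J.sub_mem hv (h v).1
      have h0 : (inner ℂ (v - T v) (v - T v) : ℂ) = 0 := (h v).2 _ hmem
      have h1 := inner_self_eq_zero.mp h0
      rw [sub_eq_zero] at h1
      exact h1.symm
    · intro hv; rw [← hv]; exact (h v).1

set_option maxHeartbeats 1000000 in
/-- Proposition 3.1. θ is a metric on MI(G), the collection of
all Λ-modulation invariant subspaces of L²(G). -/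
theorem stmt10
    (G : Type) [CommGroup G] [TopologicalSpace G] [IsTopologicalGroup G]
    [LocallyCompactSpace G] [SecondCountableTopology G]
    [MeasurableSpace G] [BorelSpace G]
    (μ : MeasureTheory.Measure G) [μ.IsHaarMeasure]
    [MeasurableSpace (PontryaginDual G)] [BorelSpace (PontryaginDual G)]
    [LocallyCompactSpace (PontryaginDual G)] [SecondCountableTopology (PontryaginDual G)]
    (ν : MeasureTheory.Measure (PontryaginDual G)) [ν.IsHaarMeasure]
    -- Λ a closed subgroup of the dual group Ĝ
    (Λ : Subgroup (PontryaginDual G)) (hΛ : IsClosed (Λ : Set (PontryaginDual G)))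
    -- Π, a measurable section for G / Λ* (Λ* = the annihilator of Λ in G)
    (PiS : Set G) (hPiSmeas : MeasurableSet PiS)
    (hPiSsec : ∀ x : G, ∃! p, p ∈ PiS ∧ ∀ l ∈ Λ, l (x / p) = 1)
    -- D, a measurable section for Ĝ / Λ
    (DS : Set (PontryaginDual G)) (hDSmeas : MeasurableSet DS)
    (hDSsec : ∀ χ : PontryaginDual G, ∃! d, d ∈ DS ∧ χ / d ∈ Λ)
    -- the modulation operators M_χ on L²(G) : (M_χ f)(x) = χ(x) f(x)
    (Mod : PontryaginDual G → (MeasureTheory.Lp ℂ 2 μ →L[ℂ] MeasureTheory.Lp ℂ 2 μ))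
    (hMod : ∀ χ f, Mod χ f =ᵐ[μ] fun x => (χ x : ℂ) * f x)
    -- the translation operators T_λ on L²(Ĝ) : (T_λ g)(χ) = g(χ - λ)
    (Trans : PontryaginDual G → (MeasureTheory.Lp ℂ 2 ν →L[ℂ] MeasureTheory.Lp ℂ 2 ν))
    (hTrans : ∀ l g, Trans l g =ᵐ[ν] fun χ => g (χ / l))
    -- the Fourier (Plancherel) transform F : L²(G) → L²(Ĝ), intertwining
    -- modulations with translations
    (F : MeasureTheory.Lp ℂ 2 μ ≃ₗᵢ[ℂ] MeasureTheory.Lp ℂ 2 ν)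
    (hF : ∀ χ f, F (Mod χ f) = Trans χ (F f))
    -- the Zak-type isometric isomorphism Z : L²(Ĝ) → L²(Π, L²(D)) of
    -- Bownik–Helson–Petersen, satisfying Z(T_λ φ) = X_λ|_Π · Z(φ) for λ ∈ Λ
    (Z : MeasureTheory.Lp ℂ 2 ν ≃ₗᵢ[ℂ]
      MeasureTheory.Lp (MeasureTheory.Lp ℂ 2 (ν.restrict DS)) 2 (μ.restrict PiS))
    (hZ : ∀ l ∈ Λ, ∀ g, Z (Trans l g) =ᵐ[μ.restrict PiS]
      fun x => ((l x : ℂ)) • (Z g) x)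
-- J assigns to each Λ-modulation invariant subspace W its associated
    -- measurable range function J W, with orthogonal projections P W x onto J W x
    (J : Submodule ℂ (MeasureTheory.Lp ℂ 2 μ) → G →
      Submodule ℂ (MeasureTheory.Lp ℂ 2 (ν.restrict DS)))
    (P : Submodule ℂ (MeasureTheory.Lp ℂ 2 μ) → G →
      (MeasureTheory.Lp ℂ 2 (ν.restrict DS)) →L[ℂ] (MeasureTheory.Lp ℂ 2 (ν.restrict DS)))
    (hJP : ∀ W : Submodule ℂ (MeasureTheory.Lp ℂ 2 μ),
      IsClosed (W : Set (MeasureTheory.Lp ℂ 2 μ)) →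
      (∀ l ∈ Λ, ∀ f ∈ W, Mod l f ∈ W) →
      (∀ x, IsClosed ((J W x : Set (MeasureTheory.Lp ℂ 2 (ν.restrict DS))))) ∧
      (∀ x v, P W x v ∈ J W x ∧ ∀ w ∈ J W x, (inner ℂ (v - P W x v) w : ℂ) = 0) ∧
      (∀ a b : MeasureTheory.Lp ℂ 2 (ν.restrict DS),
        Measurable fun x => (inner ℂ (P W x a) b : ℂ)) ∧
      (∀ f : MeasureTheory.Lp ℂ 2 μ,
        f ∈ W ↔ ∀ᵐ x ∂(μ.restrict PiS), (Z (F f)) x ∈ J W x))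
    :
    ∀ V W U : Submodule ℂ (Lp ℂ 2 μ),
      (IsClosed (V : Set (Lp ℂ 2 μ)) ∧ ∀ l ∈ Λ, ∀ f ∈ V, Mod l f ∈ V) →
      (IsClosed (W : Set (Lp ℂ 2 μ)) ∧ ∀ l ∈ Λ, ∀ f ∈ W, Mod l f ∈ W) →
      (IsClosed (U : Set (Lp ℂ 2 μ)) ∧ ∀ l ∈ Λ, ∀ f ∈ U, Mod l f ∈ U) →
      0 ≤ modMetric (μ.restrict PiS) P V W ∧
      (modMetric (μ.restrict PiS) P V W = 0 ↔ V = W) ∧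
      modMetric (μ.restrict PiS) P V W = modMetric (μ.restrict PiS) P W V ∧
      modMetric (μ.restrict PiS) P V W ≤
        modMetric (μ.restrict PiS) P V U + modMetric (μ.restrict PiS) P U W := by

  intro V W U hVp hWp hUp
  obtain ⟨hVc, hVP, hVms, hVmem⟩ := hJP V hVp.1 hVp.2
  obtain ⟨hWc, hWP, hWms, hWmem⟩ := hJP W hWp.1 hWp.2
  obtain ⟨hUc, hUP, hUms, hUmem⟩ := hJP U hUp.1 hUp.2
  set m' := μ.restrict PiS with hm'
  have projV := fun x => proj_aux (P V x) (J V x) (hVP x)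
  have projW := fun x => proj_aux (P W x) (J W x) (hWP x)
  have projU := fun x => proj_aux (P U x) (J U x) (hUP x)
  have hnV : ∀ x, ‖P V x‖ ≤ 1 := fun x => (projV x).1
  have hnW : ∀ x, ‖P W x‖ ≤ 1 := fun x => (projW x).1
  have hnU : ∀ x, ‖P U x‖ ≤ 1 := fun x => (projU x).1
  have hbx : ∀ A B : Submodule ℂ (Lp ℂ 2 μ), (∀ x, ‖P A x‖ ≤ 1) → (∀ x, ‖P B x‖ ≤ 1) →
      (3:ℝ) ∈ {α : ℝ | 0 < α ∧ m' {x | α < ‖P A x - P B x‖} = 0} := by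
    intro A B hA hB
    refine ⟨by norm_num, ?_⟩
    have he : {x : G | (3:ℝ) < ‖P A x - P B x‖} = ∅ := by
      ext x
      simp only [Set.mem_setOf_eq, Set.mem_empty_iff_false, iff_false, not_lt]
      calc ‖P A x - P B x‖ ≤ ‖P A x‖ + ‖P B x‖ := norm_sub_le _ _
        _ ≤ 3 := by linarith [hA x, hB x]
    rw [he]; exact measure_empty
  have hbdd : ∀ A B : Submodule ℂ (Lp ℂ 2 μ),
      BddBelow {α : ℝ | 0 < α ∧ m' {x | α < ‖P A x - P B x‖} = 0} :=
    fun A B => ⟨0, fun a ha => ha.1.le⟩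
  have hzero : ∀ A B : Submodule ℂ (Lp ℂ 2 μ), (∀ x, ‖P A x‖ ≤ 1) → (∀ x, ‖P B x‖ ≤ 1) →
      modMetric m' P A B = 0 → ∀ᵐ x ∂m', P A x = P B x := by
    intro A B hA hB h0
    have hne : Set.Nonempty {α : ℝ | 0 < α ∧ m' {x | α < ‖P A x - P B x‖} = 0} :=
      ⟨3, hbx A B hA hB⟩
    have hnull : ∀ n : ℕ, m' {x | 1/(n+1 : ℝ) < ‖P A x - P B x‖} = 0 := by
      intro n
      have hlt : sInf {α : ℝ | 0 < α ∧ m' {x | α < ‖P A x - P B x‖} = 0} < 1/(n+1 : ℝ) := by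
        have : sInf {α : ℝ | 0 < α ∧ m' {x | α < ‖P A x - P B x‖} = 0} = 0 := h0
        rw [this]; positivity
      obtain ⟨a, ha, halt⟩ := exists_lt_of_csInf_lt hne hlt
      exact measure_mono_null (fun x hx => lt_trans halt hx) ha.2
    have hun := measure_iUnion_null hnull
    have hsub : {x : G | ¬ P A x = P B x} ⊆
        ⋃ n : ℕ, {x | 1/(n+1:ℝ) < ‖P A x - P B x‖} := by
      intro x hx
      have hpos : 0 < ‖P A x - P B x‖ := by
        rw [norm_pos_iff]; exact sub_ne_zero.mpr hx
      obtain ⟨n, hn⟩ := exists_nat_one_div_lt hpos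
      exact Set.mem_iUnion.mpr ⟨n, hn⟩
    exact ae_iff.mpr (measure_mono_null hsub hun)
  refine ⟨Real.sInf_nonneg (fun a ha => ha.1.le), ⟨?_, ?_⟩, ?_, ?_⟩
  · -- θ = 0 → V = W
    intro h0
    have hae := hzero V W hnV hnW h0
    have hJeq : ∀ᵐ x ∂m', (J V x : Set (Lp ℂ 2 (ν.restrict DS))) = J W x := by
      filter_upwards [hae] with x hx
      ext v
      rw [SetLike.mem_coe, SetLike.mem_coe, (projV x).2 v, (projW x).2 v, hx]
    ext f
    rw [hVmem f, hWmem f]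
    constructor
    · intro hf
      filter_upwards [hJeq, hf] with x h1 h2
      rw [← SetLike.mem_coe, ← h1]; exact h2
    · intro hf
      filter_upwards [hJeq, hf] with x h1 h2
      rw [← SetLike.mem_coe, h1]; exact h2
  · -- V = W → θ = 0
    intro hVW
    subst hVW
    have hS : {α : ℝ | 0 < α ∧ m' {x | α < ‖P V x - P V x‖} = 0} = Set.Ioi 0 := by
      ext a
      simp only [Set.mem_setOf_eq, sub_self, norm_zero, Set.mem_Ioi]
      constructor
      · exact fun h => h.1
      · intro h
        refine ⟨h, ?_⟩
        have he : {x : G | a < (0:ℝ)} = ∅ :=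
          Set.eq_empty_iff_forall_notMem.mpr (fun x hx => lt_asymm h hx)
        rw [he]; exact measure_empty
    show sInf {α : ℝ | 0 < α ∧ m' {x | α < ‖P V x - P V x‖} = 0} = 0
    rw [hS]; exact csInf_Ioi
  · -- symmetry
    have hse : ∀ a : ℝ, {x : G | a < ‖P V x - P W x‖} = {x | a < ‖P W x - P V x‖} := by
      intro a; ext x
      simp only [Set.mem_setOf_eq]
      rw [norm_sub_rev]
    show sInf {α : ℝ | 0 < α ∧ m' {x | α < ‖P V x - P W x‖} = 0}
      = sInf {α : ℝ | 0 < α ∧ m' {x | α < ‖P W x - P V x‖} = 0}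
    congr 1
    ext a
    simp only [Set.mem_setOf_eq]
    rw [hse a]
  · -- triangle inequality
    set S1 := {α : ℝ | 0 < α ∧ m' {x | α < ‖P V x - P U x‖} = 0} with hS1
    set S2 := {α : ℝ | 0 < α ∧ m' {x | α < ‖P U x - P W x‖} = 0} with hS2
    have hne1 : S1.Nonempty := ⟨3, hbx V U hnV hnU⟩
    have hne2 : S2.Nonempty := ⟨3, hbx U W hnU hnW⟩
    have key : ∀ a ∈ S1, ∀ b ∈ S2, modMetric m' P V W ≤ a + b := by
      intro a ha b hb
      have hmem : a + b ∈ {α : ℝ | 0 < α ∧ m' {x | α < ‖P V x - P W x‖} = 0} := by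
        refine ⟨add_pos ha.1 hb.1, ?_⟩
        have hsub : {x : G | a + b < ‖P V x - P W x‖} ⊆
            {x | a < ‖P V x - P U x‖} ∪ {x | b < ‖P U x - P W x‖} := by
          intro x hx
          simp only [Set.mem_setOf_eq] at hx
          simp only [Set.mem_union, Set.mem_setOf_eq]
          by_contra hc
          push_neg at hc
          obtain ⟨h1, h2⟩ := hc
          have hle : ‖P V x - P W x‖ ≤ a + b := by
            calc ‖P V x - P W x‖ = ‖(P V x - P U x) + (P U x - P W x)‖ := by
                  rw [sub_add_sub_cancel]
              _ ≤ ‖P V x - P U x‖ + ‖P U x - P W x‖ := norm_add_le _ _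
              _ ≤ a + b := add_le_add h1 h2
          linarith
        exact measure_mono_null hsub (measure_union_null ha.2 hb.2)
      exact csInf_le (hbdd V W) hmem
    have hS2inf : sInf S2 = modMetric m' P U W := rfl
    have hS1inf : sInf S1 = modMetric m' P V U := rfl
    have h2 : ∀ a ∈ S1, modMetric m' P V W - modMetric m' P U W ≤ a := by
      intro a ha
      have hb : ∀ b ∈ S2, modMetric m' P V W - a ≤ b := fun b hb => by
        linarith [key a ha b hb]
      have := le_csInf hne2 hb
      rw [hS2inf] at this
      linarith
    have := le_csInf hne1 h2
    rw [hS1inf] at this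
    linarith
end

section
/- (Theorem 3.3) Let G be a second countable LCA group and Λ a closed subgroup of Ĝ. The space MI(G) of all Λ-modulation invariant subspaces of L²(G) is a complete metric space under the modulation metric θ: every Cauchy sequence (W_n) in (MI(G), θ) converges to some W ∈ MI(G). -/
open MeasureTheory
open scoped ENNReal

section auxproj
variable {H : Type*} [NormedAddCommGroup H] [InnerProductSpace ℂ H]

lemma aux_fix {Jx : Submodule ℂ H} {T : H →L[ℂ] H}
    (hT : ∀ v, T v ∈ Jx ∧ ∀ w ∈ Jx, (inner ℂ (v - T v) w : ℂ) = 0) :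
    ∀ w ∈ Jx, T w = w := by
  intro w hw
  have h1 : w - T w ∈ Jx := Jx.sub_mem hw (hT w).1
  have h2 := (hT w).2 _ h1
  rw [inner_self_eq_zero, sub_eq_zero] at h2
  exact h2.symm

lemma aux_inner_eq {Jx : Submodule ℂ H} {T : H →L[ℂ] H}
    (hT : ∀ v, T v ∈ Jx ∧ ∀ w ∈ Jx, (inner ℂ (v - T v) w : ℂ) = 0) (v : H) :
    ∀ w ∈ Jx, (inner ℂ v w : ℂ) = inner ℂ (T v) w := by
  intro w hw
  have := (hT v).2 w hw
  rw [inner_sub_left, sub_eq_zero] at this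
  exact this

lemma aux_symm {Jx : Submodule ℂ H} {T : H →L[ℂ] H}
    (hT : ∀ v, T v ∈ Jx ∧ ∀ w ∈ Jx, (inner ℂ (v - T v) w : ℂ) = 0) (v w : H) :
    (inner ℂ (T v) w : ℂ) = inner ℂ v (T w) := by
  have h1 : (inner ℂ v (T w) : ℂ) = inner ℂ (T v) (T w) := aux_inner_eq hT v (T w) (hT w).1
  have h2 : (inner ℂ w (T v) : ℂ) = inner ℂ (T w) (T v) := aux_inner_eq hT w (T v) (hT v).1
  have h2' := congrArg (starRingEnd ℂ) h2
  rw [inner_conj_symm, inner_conj_symm] at h2'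
  rw [h2', h1]

lemma aux_norm_le {Jx : Submodule ℂ H} {T : H →L[ℂ] H}
    (hT : ∀ v, T v ∈ Jx ∧ ∀ w ∈ Jx, (inner ℂ (v - T v) w : ℂ) = 0) (v : H) :
    ‖T v‖ ≤ ‖v‖ := by
  have h1 : (inner ℂ v (T v) : ℂ) = inner ℂ (T v) (T v) := aux_inner_eq hT v (T v) (hT v).1
  have h2 : ‖T v‖ ^ 2 = ‖(inner ℂ v (T v) : ℂ)‖ := by
    rw [h1, inner_self_eq_norm_sq_to_K]
    simp
  have h3 : ‖(inner ℂ v (T v) : ℂ)‖ ≤ ‖v‖ * ‖T v‖ := norm_inner_le_norm v (T v)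
  nlinarith [norm_nonneg (T v), norm_nonneg v]

lemma aux_proj_ext {Jx : Submodule ℂ H} {T T' : H →L[ℂ] H}
    (hT : ∀ v, T v ∈ Jx ∧ ∀ w ∈ Jx, (inner ℂ (v - T v) w : ℂ) = 0)
    (hT' : ∀ v, T' v ∈ Jx ∧ ∀ w ∈ Jx, (inner ℂ (v - T' v) w : ℂ) = 0) :
    T = T' := by
  ext v
  have hd : T v - T' v ∈ Jx := Jx.sub_mem (hT v).1 (hT' v).1
  have h1 := (hT v).2 _ hd
  have h2 := (hT' v).2 _ hd
  rw [inner_sub_left] at h1 h2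
  have : (inner ℂ (T v - T' v) (T v - T' v) : ℂ) = 0 := by
    rw [inner_sub_left]
    rw [sub_eq_zero] at h1 h2
    rw [← h1, ← h2]
    ring
  rw [inner_self_eq_zero, sub_eq_zero] at this
  exact this

end auxproj

section auxmeas
variable {X : Type*} [MeasurableSpace X] {H : Type*} [NormedAddCommGroup H]
    [InnerProductSpace ℂ H] [SecondCountableTopology H] [CompleteSpace H]

lemma aux_meas (T : X → H →L[ℂ] H)
    (hT : ∀ a b : H, Measurable fun x => (inner ℂ (T x a) b : ℂ)) (a : H) :
    StronglyMeasurable fun x => T x a := by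
  borelize H
  refine Measurable.stronglyMeasurable ?_
  obtain ⟨b, hb⟩ := TopologicalSpace.exists_dense_seq H
  set g : H → (ℕ → ℂ) := fun v i => inner ℂ v (b i) with hg
  have hg_cont : Continuous g := continuous_pi fun i => continuous_id.inner continuous_const
  have hg_inj : Function.Injective g := by
    intro v w h
    have hzero : ∀ i, (inner ℂ (v - w) (b i) : ℂ) = 0 := by
      intro i
      have := congrFun h i
      simp only [hg] at this
      rw [inner_sub_left, this, sub_self]
    have hall : ∀ u : H, (inner ℂ (v - w) u : ℂ) = 0 := by
      have hclosed : IsClosed {u : H | (inner ℂ (v - w) u : ℂ) = 0} :=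
        isClosed_eq (continuous_const.inner continuous_id) continuous_const
      have hsub : Set.range b ⊆ {u : H | (inner ℂ (v - w) u : ℂ) = 0} := by
        rintro _ ⟨i, rfl⟩; exact hzero i
      have := hclosed.closure_subset_iff.2 hsub
      rw [hb.closure_range] at this
      exact fun u => this (Set.mem_univ u)
    have := hall (v - w)
    rw [inner_self_eq_zero, sub_eq_zero] at this
    exact this
  have hemb : MeasurableEmbedding g := hg_cont.measurableEmbedding hg_inj
  rw [← hemb.measurable_comp_iff]
  exact measurable_pi_iff.2 fun i => hT a (b i)

end auxmeas

section auxtheta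
variable {X H ι : Type*} [MeasurableSpace X] [NormedAddCommGroup H] [NormedSpace ℂ H]

lemma aux_theta_lt_imp (m' : MeasureTheory.Measure X) (P : ι → X → H →L[ℂ] H) (V W : ι)
    (hbV : ∀ x, ‖P V x‖ ≤ 1) (hbW : ∀ x, ‖P W x‖ ≤ 1) {ε : ℝ}
    (h : modMetric m' P V W < ε) : ∀ᵐ x ∂m', ‖P V x - P W x‖ ≤ ε := by
  have h3 : (3:ℝ) ∈ {α : ℝ | 0 < α ∧ m' {x | α < ‖P V x - P W x‖} = 0} := by
    constructor
    · norm_num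
    · have : {x | (3:ℝ) < ‖P V x - P W x‖} = ∅ := by
        ext x
        simp only [Set.mem_setOf_eq, Set.mem_empty_iff_false, iff_false, not_lt]
        calc ‖P V x - P W x‖ ≤ ‖P V x‖ + ‖P W x‖ := norm_sub_le _ _
          _ ≤ 3 := by linarith [hbV x, hbW x]
      rw [this]; exact measure_empty
  obtain ⟨α, hα, hαε⟩ := exists_lt_of_csInf_lt ⟨3, h3⟩ h
  rw [ae_iff]
  refine measure_mono_null ?_ hα.2
  intro x hx
  simp only [Set.mem_setOf_eq, not_le] at hx ⊢
  linarith

lemma aux_theta_le (m' : MeasureTheory.Measure X) (P : ι → X → H →L[ℂ] H) (V W : ι)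
    {δ ε : ℝ} (h : ∀ᵐ x ∂m', ‖P V x - P W x‖ ≤ δ) (hδε : δ < ε) (hε0 : 0 < ε) :
    modMetric m' P V W ≤ ε := by
  apply csInf_le
  · exact ⟨0, fun α hα => hα.1.le⟩
  · refine ⟨hε0, ?_⟩
    rw [ae_iff] at h
    refine measure_mono_null ?_ h
    intro x hx
    simp only [Set.mem_setOf_eq, not_le] at hx ⊢
    linarith

end auxtheta

set_option maxHeartbeats 1600000 in
/-- Theorem 3.3. The space MI(G) of all Λ-modulation invariant
subspaces of L²(G) is complete in the modulation metric θ: every Cauchy sequence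
converges to a Λ-modulation invariant subspace. -/
theorem stmt13
    (G : Type) [CommGroup G] [TopologicalSpace G] [IsTopologicalGroup G]
    [LocallyCompactSpace G] [SecondCountableTopology G]
    [MeasurableSpace G] [BorelSpace G]
    (μ : MeasureTheory.Measure G) [μ.IsHaarMeasure]
    [MeasurableSpace (PontryaginDual G)] [BorelSpace (PontryaginDual G)]
    [LocallyCompactSpace (PontryaginDual G)] [SecondCountableTopology (PontryaginDual G)]
    (ν : MeasureTheory.Measure (PontryaginDual G)) [ν.IsHaarMeasure]
    -- Λ a closed subgroup of the dual group Ĝ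
    (Λ : Subgroup (PontryaginDual G)) (hΛ : IsClosed (Λ : Set (PontryaginDual G)))
    -- Π, a measurable section for G / Λ* (Λ* = the annihilator of Λ in G)
    (PiS : Set G) (hPiSmeas : MeasurableSet PiS)
    (hPiSsec : ∀ x : G, ∃! p, p ∈ PiS ∧ ∀ l ∈ Λ, l (x / p) = 1)
    -- D, a measurable section for Ĝ / Λ
    (DS : Set (PontryaginDual G)) (hDSmeas : MeasurableSet DS)
    (hDSsec : ∀ χ : PontryaginDual G, ∃! d, d ∈ DS ∧ χ / d ∈ Λ)
    -- the modulation operators M_χ on L²(G) : (M_χ f)(x) = χ(x) f(x)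
    (Mod : PontryaginDual G → (MeasureTheory.Lp ℂ 2 μ →L[ℂ] MeasureTheory.Lp ℂ 2 μ))
    (hMod : ∀ χ f, Mod χ f =ᵐ[μ] fun x => (χ x : ℂ) * f x)
    -- the translation operators T_λ on L²(Ĝ) : (T_λ g)(χ) = g(χ - λ)
    (Trans : PontryaginDual G → (MeasureTheory.Lp ℂ 2 ν →L[ℂ] MeasureTheory.Lp ℂ 2 ν))
    (hTrans : ∀ l g, Trans l g =ᵐ[ν] fun χ => g (χ / l))
    -- the Fourier (Plancherel) transform F : L²(G) → L²(Ĝ), intertwining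
    -- modulations with translations
    (F : MeasureTheory.Lp ℂ 2 μ ≃ₗᵢ[ℂ] MeasureTheory.Lp ℂ 2 ν)
    (hF : ∀ χ f, F (Mod χ f) = Trans χ (F f))
    -- the Zak-type isometric isomorphism Z : L²(Ĝ) → L²(Π, L²(D)) of
    -- Bownik–Helson–Petersen, satisfying Z(T_λ φ) = X_λ|_Π · Z(φ) for λ ∈ Λ
    (Z : MeasureTheory.Lp ℂ 2 ν ≃ₗᵢ[ℂ]
      MeasureTheory.Lp (MeasureTheory.Lp ℂ 2 (ν.restrict DS)) 2 (μ.restrict PiS))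
    (hZ : ∀ l ∈ Λ, ∀ g, Z (Trans l g) =ᵐ[μ.restrict PiS]
      fun x => ((l x : ℂ)) • (Z g) x)
-- J assigns to each Λ-modulation invariant subspace W its associated
    -- measurable range function J W, with orthogonal projections P W x onto J W x
    (J : Submodule ℂ (MeasureTheory.Lp ℂ 2 μ) → G →
      Submodule ℂ (MeasureTheory.Lp ℂ 2 (ν.restrict DS)))
    (P : Submodule ℂ (MeasureTheory.Lp ℂ 2 μ) → G →
      (MeasureTheory.Lp ℂ 2 (ν.restrict DS)) →L[ℂ] (MeasureTheory.Lp ℂ 2 (ν.restrict DS)))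
    (hJP : ∀ W : Submodule ℂ (MeasureTheory.Lp ℂ 2 μ),
      IsClosed (W : Set (MeasureTheory.Lp ℂ 2 μ)) →
      (∀ l ∈ Λ, ∀ f ∈ W, Mod l f ∈ W) →
      (∀ x, IsClosed ((J W x : Set (MeasureTheory.Lp ℂ 2 (ν.restrict DS))))) ∧
      (∀ x v, P W x v ∈ J W x ∧ ∀ w ∈ J W x, (inner ℂ (v - P W x v) w : ℂ) = 0) ∧
      (∀ a b : MeasureTheory.Lp ℂ 2 (ν.restrict DS),
        Measurable fun x => (inner ℂ (P W x a) b : ℂ)) ∧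
      (∀ f : MeasureTheory.Lp ℂ 2 μ,
        f ∈ W ↔ ∀ᵐ x ∂(μ.restrict PiS), (Z (F f)) x ∈ J W x))
    (Wseq : ℕ → Submodule ℂ (Lp ℂ 2 μ))
    (hWseq : ∀ n, IsClosed ((Wseq n : Set (Lp ℂ 2 μ))) ∧
      ∀ l ∈ Λ, ∀ f ∈ Wseq n, Mod l f ∈ Wseq n)
    -- (Wₙ) is Cauchy in the modulation metric
    (hCauchy : ∀ ε : ℝ, 0 < ε → ∃ N : ℕ, ∀ m ≥ N, ∀ n ≥ N,
      modMetric (μ.restrict PiS) P (Wseq m) (Wseq n) < ε) :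
    ∃ W : Submodule ℂ (Lp ℂ 2 μ),
      IsClosed ((W : Set (Lp ℂ 2 μ))) ∧ (∀ l ∈ Λ, ∀ f ∈ W, Mod l f ∈ W) ∧
      Filter.Tendsto (fun n => modMetric (μ.restrict PiS) P (Wseq n) W)
        Filter.atTop (nhds 0) := by
  classical
  haveI : Fact ((2:ℝ≥0∞) ≠ ∞) := ⟨by norm_num⟩
  -- basic facts about the projections of the sequence
  have hproj : ∀ n x v, P (Wseq n) x v ∈ J (Wseq n) x ∧
      ∀ w ∈ J (Wseq n) x, (inner ℂ (v - P (Wseq n) x v) w : ℂ) = 0 :=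
    fun n => (hJP (Wseq n) (hWseq n).1 (hWseq n).2).2.1
  have hPnorm : ∀ n x, ‖P (Wseq n) x‖ ≤ 1 := by
    intro n x
    refine ContinuousLinearMap.opNorm_le_bound _ zero_le_one (fun v => ?_)
    rw [one_mul]
    exact aux_norm_le (fun v => hproj n x v) v
  -- choose a rapidly Cauchy subsequence
  choose N hN using fun k : ℕ => hCauchy ((1/2:ℝ)^k) (by positivity)
  set ns : ℕ → ℕ := fun k => (Finset.range (k+1)).sup N with hns
  have hns_ge : ∀ k, N k ≤ ns k := fun k =>
    Finset.le_sup (Finset.mem_range.2 (Nat.lt_succ_self k))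
  have hns_mono : ∀ k, ns k ≤ ns (k+1) := fun k =>
    Finset.sup_mono (Finset.range_subset_range.2 (Nat.le_succ _))
  set Pk : ℕ → G → (Lp ℂ 2 (ν.restrict DS) →L[ℂ] Lp ℂ 2 (ν.restrict DS)) := fun k x => P (Wseq (ns k)) x with hPk
  have hpair : ∀ k, ∀ᵐ x ∂(μ.restrict PiS), ‖Pk k x - Pk (k+1) x‖ ≤ (1/2:ℝ)^k := by
    intro k
    refine aux_theta_lt_imp (μ.restrict PiS) P (Wseq (ns k)) (Wseq (ns (k+1)))
      (hPnorm _) (hPnorm _) ?_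
    exact hN k (ns k) (hns_ge k) (ns (k+1)) (le_trans (hns_ge k) (hns_mono k))
  -- the pointwise limit Q
  set Q : G → (Lp ℂ 2 (ν.restrict DS) →L[ℂ] Lp ℂ 2 (ν.restrict DS)) := fun x =>
    if h : ∃ T, Filter.Tendsto (fun k => Pk k x) Filter.atTop (nhds T) then h.choose else 0
    with hQdef
  have hQt : ∀ᵐ x ∂(μ.restrict PiS), Filter.Tendsto (fun k => Pk k x) Filter.atTop (nhds (Q x)) := by
    filter_upwards [eventually_countable_forall.2 hpair] with x hx
    have hcauchy : CauchySeq (fun k => Pk k x) := by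
      refine cauchySeq_of_le_geometric_two (C := 2) (fun k => ?_)
      rw [dist_eq_norm]
      calc ‖Pk k x - Pk (k+1) x‖ ≤ (1/2:ℝ)^k := hx k
        _ = 2 / 2 / 2 ^ k := by rw [div_pow, one_pow]; norm_num
    obtain ⟨T, hT⟩ := cauchySeq_tendsto_of_complete hcauchy
    have hex : ∃ T, Filter.Tendsto (fun k => Pk k x) Filter.atTop (nhds T) := ⟨T, hT⟩
    rw [hQdef]
    simp only [dif_pos hex]
    exact hex.choose_spec
  have hQrate : ∀ᵐ x ∂(μ.restrict PiS), ∀ k, ‖Pk k x - Q x‖ ≤ 2 / 2^k := by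
    filter_upwards [hQt, eventually_countable_forall.2 hpair] with x hxt hxp
    intro k
    have := dist_le_of_le_geometric_two_of_tendsto (C := 2) (f := fun k => Pk k x)
      (fun n => by
        rw [dist_eq_norm]
        calc ‖Pk n x - Pk (n+1) x‖ ≤ (1/2:ℝ)^n := hxp n
          _ = 2 / 2 / 2 ^ n := by rw [div_pow, one_pow]; norm_num) hxt k
    rwa [dist_eq_norm] at this
  have hQnorm : ∀ᵐ x ∂(μ.restrict PiS), ‖Q x‖ ≤ 1 := by
    filter_upwards [hQt] with x hxt
    exact le_of_tendsto hxt.norm (Filter.Eventually.of_forall (fun k => hPnorm _ x))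
  -- applying the limit pointwise
  have happly : ∀ x, Filter.Tendsto (fun k => Pk k x) Filter.atTop (nhds (Q x)) →
      ∀ v : Lp ℂ 2 (ν.restrict DS), Filter.Tendsto (fun k => Pk k x v) Filter.atTop (nhds (Q x v)) := by
    intro x hxt v
    have hc : Continuous (fun T : Lp ℂ 2 (ν.restrict DS) →L[ℂ] Lp ℂ 2 (ν.restrict DS) => T v) := (ContinuousLinearMap.apply ℂ (Lp ℂ 2 (ν.restrict DS)) v).continuous
    exact (hc.tendsto _).comp hxt
  have hQsymm : ∀ᵐ x ∂(μ.restrict PiS), ∀ v w : Lp ℂ 2 (ν.restrict DS), (inner ℂ (Q x v) w : ℂ) = inner ℂ v (Q x w) := by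
    filter_upwards [hQt] with x hxt
    intro v w
    have h1 : Filter.Tendsto (fun k => (inner ℂ (Pk k x v) w : ℂ)) Filter.atTop
        (nhds (inner ℂ (Q x v) w)) := (happly x hxt v).inner tendsto_const_nhds
    have h2 : Filter.Tendsto (fun k => (inner ℂ v (Pk k x w) : ℂ)) Filter.atTop
        (nhds (inner ℂ v (Q x w))) := tendsto_const_nhds.inner (happly x hxt w)
    have heq : ∀ k, (inner ℂ (Pk k x v) w : ℂ) = inner ℂ v (Pk k x w) := fun k =>
      aux_symm (fun u => hproj (ns k) x u) v w
    exact tendsto_nhds_unique (h1.congr (fun k => heq k)) h2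
  have hQidem : ∀ᵐ x ∂(μ.restrict PiS), ∀ v : Lp ℂ 2 (ν.restrict DS), Q x (Q x v) = Q x v := by
    filter_upwards [hQt] with x hxt
    intro v
    have ha : Filter.Tendsto (fun k => Pk k x (Q x v)) Filter.atTop (nhds (Q x (Q x v))) :=
      happly x hxt (Q x v)
    have hb : Filter.Tendsto (fun k => Pk k x (Q x v)) Filter.atTop (nhds (Q x v)) := by
      rw [tendsto_iff_norm_sub_tendsto_zero]
      have hvlim : Filter.Tendsto (fun k => ‖Pk k x v - Q x v‖) Filter.atTop (nhds 0) := by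
        rw [← tendsto_iff_norm_sub_tendsto_zero]
        exact happly x hxt v
      refine squeeze_zero (fun k => norm_nonneg _) (fun k => ?_)
        (by simpa using hvlim.add hvlim)
      have hidem : Pk k x (Pk k x v) = Pk k x v :=
        aux_fix (fun u => hproj (ns k) x u) _ (hproj (ns k) x v).1
      have hsplit : Pk k x (Q x v) - Q x v
          = Pk k x (Q x v - Pk k x v) + (Pk k x v - Q x v) := by
        rw [map_sub, hidem]; abel
      calc ‖Pk k x (Q x v) - Q x v‖
          ≤ ‖Pk k x (Q x v - Pk k x v)‖ + ‖Pk k x v - Q x v‖ := by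
            rw [hsplit]; exact norm_add_le _ _
        _ ≤ ‖Q x v - Pk k x v‖ + ‖Pk k x v - Q x v‖ := by
            gcongr
            exact aux_norm_le (fun u => hproj (ns k) x u) _
        _ = ‖Pk k x v - Q x v‖ + ‖Pk k x v - Q x v‖ := by rw [norm_sub_rev]
    exact tendsto_nhds_unique ha hb
  -- the candidate subspace W
  set W : Submodule ℂ (Lp ℂ 2 μ) :=
    { carrier := {f | ∀ᵐ x ∂(μ.restrict PiS), Q x ((Z (F f)) x) = (Z (F f)) x}
      add_mem' := by
        intro f g hf hg
        have h1 : ⇑(Z (F (f+g))) =ᵐ[μ.restrict PiS] fun x => (Z (F f)) x + (Z (F g)) x := by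
          have he : Z (F (f+g)) = Z (F f) + Z (F g) := by rw [map_add, map_add]
          rw [he]
          exact Lp.coeFn_add _ _
        show ∀ᵐ x ∂(μ.restrict PiS), Q x ((Z (F (f+g))) x) = (Z (F (f+g))) x
        filter_upwards [hf, hg, h1] with x hfx hgx h1x
        rw [h1x, map_add, hfx, hgx]
      zero_mem' := by
        have h1 : ⇑(Z (F (0 : Lp ℂ 2 μ))) =ᵐ[μ.restrict PiS] 0 := by
          have he : Z (F (0 : Lp ℂ 2 μ)) = 0 := by rw [map_zero, map_zero]
          rw [he]
          exact Lp.coeFn_zero _ _ _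
        show ∀ᵐ x ∂(μ.restrict PiS), Q x ((Z (F (0 : Lp ℂ 2 μ))) x) = (Z (F (0 : Lp ℂ 2 μ))) x
        filter_upwards [h1] with x h1x
        rw [h1x, Pi.zero_apply, map_zero]
      smul_mem' := by
        intro c f hf
        have h1 : ⇑(Z (F (c • f))) =ᵐ[μ.restrict PiS] fun x => c • (Z (F f)) x := by
          have he : Z (F (c • f)) = c • Z (F f) := by rw [F.map_smul, Z.map_smul]
          rw [he]
          exact Lp.coeFn_smul _ _
        show ∀ᵐ x ∂(μ.restrict PiS), Q x ((Z (F (c • f))) x) = (Z (F (c • f))) x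
        filter_upwards [hf, h1] with x hfx h1x
        rw [h1x, _root_.map_smul, hfx] } with hWdef
  have hWiff : ∀ f : Lp ℂ 2 μ, f ∈ W ↔ ∀ᵐ x ∂(μ.restrict PiS), Q x ((Z (F f)) x) = (Z (F f)) x :=
    fun f => Iff.rfl
  -- W is closed
  have hWclosed : IsClosed (W : Set (Lp ℂ 2 μ)) := by
    refine IsSeqClosed.isClosed ?_
    intro f f₀ hfW hflim
    have hZt : Filter.Tendsto (fun j => Z (F (f j))) Filter.atTop (nhds (Z (F f₀))) := by
      have hc : Continuous fun g : Lp ℂ 2 μ => Z (F g) :=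
        Z.continuous.comp F.continuous
      exact (hc.tendsto f₀).comp hflim
    rw [Lp.tendsto_Lp_iff_tendsto_eLpNorm'] at hZt
    have hmeas' : TendstoInMeasure (μ.restrict PiS) (fun j => ⇑(Z (F (f j)))) Filter.atTop ⇑(Z (F f₀)) :=
      tendstoInMeasure_of_tendsto_eLpNorm (p := 2) (μ := μ.restrict PiS)
        (f := fun j => ⇑(Z (F (f j)))) (g := ⇑(Z (F f₀))) (by norm_num)
        (fun j => Lp.aestronglyMeasurable _) (Lp.aestronglyMeasurable _) hZt
    obtain ⟨σ, hσ, hae⟩ := hmeas'.exists_seq_tendsto_ae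
    have hfWs : ∀ᵐ x ∂(μ.restrict PiS), ∀ j, Q x ((Z (F (f (σ j)))) x) = (Z (F (f (σ j)))) x :=
      eventually_countable_forall.2 fun j => (hWiff _).1 (hfW (σ j))
    refine (hWiff f₀).2 ?_
    filter_upwards [hae, hfWs] with x hx hxW
    have h1 : Filter.Tendsto (fun j => Q x ((Z (F (f (σ j)))) x)) Filter.atTop
        (nhds (Q x ((Z (F f₀)) x))) := ((Q x).continuous.tendsto _).comp hx
    have h2 : Filter.Tendsto (fun j => Q x ((Z (F (f (σ j)))) x)) Filter.atTop
        (nhds ((Z (F f₀)) x)) := hx.congr (fun j => (hxW j).symm)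
    exact tendsto_nhds_unique h1 h2
  -- W is Λ-modulation invariant
  have hWinv : ∀ l ∈ Λ, ∀ f ∈ W, Mod l f ∈ W := by
    intro l hl f hf
    have h1 : Z (F (Mod l f)) = Z (Trans l (F f)) := by rw [hF]
    have h2 : ⇑(Z (F (Mod l f))) =ᵐ[μ.restrict PiS] fun x => ((l x : ℂ)) • (Z (F f)) x := by
      rw [h1]
      exact hZ l hl (F f)
    refine (hWiff _).2 ?_
    filter_upwards [(hWiff f).1 hf, h2] with x hfx h2x
    rw [h2x, _root_.map_smul, hfx]
  haveI hsf : SigmaFinite (μ.restrict PiS) := inferInstance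
  haveI hsc : SecondCountableTopology (Lp ℂ 2 (ν.restrict DS)) := inferInstance
  obtain ⟨b, hb⟩ := TopologicalSpace.exists_dense_seq (Lp ℂ 2 (ν.restrict DS))
  -- range function data for W
  obtain ⟨hJWc, hJWp, hJWm, hJWi⟩ := hJP W hWclosed hWinv
  -- strong measurability of the projection fields
  have hPkM : ∀ (k : ℕ) (a : Lp ℂ 2 (ν.restrict DS)), StronglyMeasurable fun x => Pk k x a :=
    fun k a => aux_meas _ (fun a b => (hJP (Wseq (ns k)) (hWseq _).1 (hWseq _).2).2.2.1 a b) a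
  have hQaM : ∀ a : Lp ℂ 2 (ν.restrict DS),
      AEStronglyMeasurable (fun x => Q x a) (μ.restrict PiS) := by
    intro a
    refine aestronglyMeasurable_of_tendsto_ae Filter.atTop
      (fun k => (hPkM k a).aestronglyMeasurable) ?_
    filter_upwards [hQt] with x hxt
    exact happly x hxt a
  have hPWM : ∀ a : Lp ℂ 2 (ν.restrict DS), StronglyMeasurable fun x => P W x a :=
    fun a => aux_meas _ (fun a b => hJWm a b) a
  have hEfin : ∀ j : ℕ,
      IsFiniteMeasure ((μ.restrict PiS).restrict (spanningSets (μ.restrict PiS) j)) :=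
    fun j => ⟨by rw [Measure.restrict_apply_univ]; exact measure_spanningSets_lt_top _ j⟩
  -- the range of Q is a.e. contained in J W
  have hQbJ : ∀ᵐ x ∂(μ.restrict PiS), ∀ i, Q x (b i) ∈ J W x := by
    refine eventually_countable_forall.2 (fun i => ?_)
    have key : ∀ j : ℕ, ∀ᵐ x ∂(μ.restrict PiS),
        x ∈ spanningSets (μ.restrict PiS) j → Q x (b i) ∈ J W x := by
      intro j
      have hφm : AEStronglyMeasurable
          ((spanningSets (μ.restrict PiS) j).indicator (fun x => Q x (b i))) (μ.restrict PiS) :=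
        (hQaM (b i)).indicator (measurableSet_spanningSets _ j)
      have hφp : MemLp ((spanningSets (μ.restrict PiS) j).indicator (fun x => Q x (b i))) 2
          (μ.restrict PiS) := by
        rw [memLp_indicator_iff_restrict (measurableSet_spanningSets _ j)]
        haveI := hEfin j
        refine MemLp.of_bound ((hQaM (b i)).restrict) ‖b i‖ ?_
        refine ae_restrict_of_ae ?_
        filter_upwards [hQnorm] with x hx
        calc ‖Q x (b i)‖ ≤ ‖Q x‖ * ‖b i‖ := (Q x).le_opNorm _
          _ ≤ 1 * ‖b i‖ := mul_le_mul_of_nonneg_right hx (norm_nonneg _)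
          _ = ‖b i‖ := one_mul _
      obtain ⟨f, hZf⟩ : ∃ f : Lp ℂ 2 μ, Z (F f) = hφp.toLp _ :=
        ⟨F.symm (Z.symm (hφp.toLp _)), by
          rw [LinearIsometryEquiv.apply_symm_apply, LinearIsometryEquiv.apply_symm_apply]⟩
      have hZfc : ⇑(Z (F f)) =ᵐ[μ.restrict PiS]
          (spanningSets (μ.restrict PiS) j).indicator (fun x => Q x (b i)) := by
        rw [hZf]; exact hφp.coeFn_toLp
      have hfW : f ∈ W := by
        refine (hWiff f).2 ?_
        filter_upwards [hZfc, hQidem] with x hx hid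
        rw [hx]
        by_cases hxE : x ∈ spanningSets (μ.restrict PiS) j
        · rw [Set.indicator_of_mem hxE]; exact hid (b i)
        · rw [Set.indicator_of_notMem hxE, map_zero]
      filter_upwards [(hJWi f).1 hfW, hZfc] with x hx hxc hxE
      rw [hxc, Set.indicator_of_mem hxE] at hx
      exact hx
    filter_upwards [eventually_countable_forall.2 key] with x hx
    obtain ⟨j, hj⟩ : ∃ j, x ∈ spanningSets (μ.restrict PiS) j := by
      have hU : x ∈ ⋃ j, spanningSets (μ.restrict PiS) j := by
        rw [iUnion_spanningSets]; trivial
      exact Set.mem_iUnion.1 hU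
    exact hx j hj
  -- J W is a.e. fixed by Q
  have hPbK : ∀ᵐ x ∂(μ.restrict PiS), ∀ i, Q x (P W x (b i)) = P W x (b i) := by
    refine eventually_countable_forall.2 (fun i => ?_)
    have key : ∀ j : ℕ, ∀ᵐ x ∂(μ.restrict PiS),
        x ∈ spanningSets (μ.restrict PiS) j → Q x (P W x (b i)) = P W x (b i) := by
      intro j
      have hψp : MemLp ((spanningSets (μ.restrict PiS) j).indicator (fun x => P W x (b i))) 2
          (μ.restrict PiS) := by
        rw [memLp_indicator_iff_restrict (measurableSet_spanningSets _ j)]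
        haveI := hEfin j
        refine MemLp.of_bound ((hPWM (b i)).aestronglyMeasurable.restrict) ‖b i‖ ?_
        refine ae_restrict_of_ae (Filter.Eventually.of_forall (fun x => ?_))
        exact aux_norm_le (fun v => hJWp x v) (b i)
      obtain ⟨g, hZg⟩ : ∃ g : Lp ℂ 2 μ, Z (F g) = hψp.toLp _ :=
        ⟨F.symm (Z.symm (hψp.toLp _)), by
          rw [LinearIsometryEquiv.apply_symm_apply, LinearIsometryEquiv.apply_symm_apply]⟩
      have hZgc : ⇑(Z (F g)) =ᵐ[μ.restrict PiS]
          (spanningSets (μ.restrict PiS) j).indicator (fun x => P W x (b i)) := by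
        rw [hZg]; exact hψp.coeFn_toLp
      have hgW : g ∈ W := by
        refine (hJWi g).2 ?_
        filter_upwards [hZgc] with x hx
        rw [hx]
        by_cases hxE : x ∈ spanningSets (μ.restrict PiS) j
        · rw [Set.indicator_of_mem hxE]; exact (hJWp x (b i)).1
        · rw [Set.indicator_of_notMem hxE]; exact (J W x).zero_mem
      filter_upwards [(hWiff g).1 hgW, hZgc] with x hx hxc hxE
      rw [hxc, Set.indicator_of_mem hxE] at hx
      exact hx
    filter_upwards [eventually_countable_forall.2 key] with x hx
    obtain ⟨j, hj⟩ : ∃ j, x ∈ spanningSets (μ.restrict PiS) j := by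
      have hU : x ∈ ⋃ j, spanningSets (μ.restrict PiS) j := by
        rw [iUnion_spanningSets]; trivial
      exact Set.mem_iUnion.1 hU
    exact hx j hj
  -- conclude : P W = Q almost everywhere
  have hPQ : ∀ᵐ x ∂(μ.restrict PiS), P W x = Q x := by
    filter_upwards [hQbJ, hPbK, hQsymm, hQidem] with x hx1 hx2 hsym hid
    have hQJ : ∀ v, Q x v ∈ J W x := by
      intro v
      have hclosed : IsClosed {a : Lp ℂ 2 (ν.restrict DS) | Q x a ∈ J W x} :=
        (hJWc x).preimage (Q x).continuous
      have hsub : Set.range b ⊆ {a : Lp ℂ 2 (ν.restrict DS) | Q x a ∈ J W x} := by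
        rintro _ ⟨i, rfl⟩; exact hx1 i
      have h := hclosed.closure_subset_iff.2 hsub
      rw [hb.closure_range] at h
      exact h (Set.mem_univ v)
    have hfixall : ∀ a, Q x (P W x a) = P W x a := by
      intro a
      have hclosed : IsClosed {a : Lp ℂ 2 (ν.restrict DS) | Q x (P W x a) = P W x a} :=
        isClosed_eq ((Q x).continuous.comp (P W x).continuous) (P W x).continuous
      have hsub : Set.range b ⊆ {a : Lp ℂ 2 (ν.restrict DS) | Q x (P W x a) = P W x a} := by
        rintro _ ⟨i, rfl⟩; exact hx2 i
      have h := hclosed.closure_subset_iff.2 hsub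
      rw [hb.closure_range] at h
      exact h (Set.mem_univ a)
    have hfix : ∀ w ∈ J W x, Q x w = w := by
      intro w hw
      have h := hfixall w
      rwa [aux_fix (fun v => hJWp x v) w hw] at h
    refine aux_proj_ext (fun v => hJWp x v) (fun v => ⟨hQJ v, fun w hw => ?_⟩)
    rw [inner_sub_left, sub_eq_zero, hsym v w, hfix w hw]
  -- final convergence
  refine ⟨W, hWclosed, hWinv, ?_⟩
  rw [Metric.tendsto_atTop]
  intro ε hε
  obtain ⟨k, hk⟩ : ∃ k : ℕ, (3:ℝ) * (1/2)^k < ε/2 := by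
    obtain ⟨k, hk⟩ := exists_pow_lt_of_lt_one (show (0:ℝ) < ε/8 by linarith)
      (by norm_num : (1:ℝ)/2 < 1)
    exact ⟨k, by linarith⟩
  refine ⟨max (N k) (ns k), fun n hn => ?_⟩
  have h1 : modMetric (μ.restrict PiS) P (Wseq n) (Wseq (ns k)) < (1/2)^k :=
    hN k n (le_trans (le_max_left _ _) hn) (ns k) (hns_ge k)
  have h2 : ∀ᵐ x ∂(μ.restrict PiS), ‖P (Wseq n) x - P (Wseq (ns k)) x‖ ≤ (1/2)^k :=
    aux_theta_lt_imp (μ.restrict PiS) P _ _ (hPnorm n) (hPnorm (ns k)) h1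
  have h3 : ∀ᵐ x ∂(μ.restrict PiS), ‖P (Wseq n) x - P W x‖ ≤ 3 * (1/2)^k := by
    filter_upwards [h2, hQrate, hPQ] with x ha hbq hc
    have hbk : ‖Pk k x - Q x‖ ≤ 2/2^k := hbq k
    have heq : P (Wseq n) x - P W x = (P (Wseq n) x - Pk k x) + (Pk k x - Q x) := by
      rw [hc]; abel
    calc ‖P (Wseq n) x - P W x‖ = ‖(P (Wseq n) x - Pk k x) + (Pk k x - Q x)‖ := by rw [heq]
      _ ≤ ‖P (Wseq n) x - Pk k x‖ + ‖Pk k x - Q x‖ := norm_add_le _ _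
      _ ≤ (1/2)^k + 2/2^k := add_le_add ha hbk
      _ = 3 * (1/2)^k := by rw [div_pow, one_pow]; ring
  have hθle : modMetric (μ.restrict PiS) P (Wseq n) W ≤ ε/2 :=
    aux_theta_le _ _ _ _ h3 (by linarith) (by linarith)
  have hθ0 : 0 ≤ modMetric (μ.restrict PiS) P (Wseq n) W :=
    Real.sInf_nonneg (fun α hα => hα.1.le)
  rw [Real.dist_eq, sub_zero, abs_of_nonneg hθ0]
  linarith
end
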